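/- For every ε ≥ 0 and every distribution p on V, the distribution T_{ε,0}(p) is (ε,0)-close to p. -/

import Mathlib

open Finset

/-- Prefix sum `s_k = p_1 + ⋯ + p_k` (0-indexed internally: sum of entries with index `< k`). -/
noncomputable def prefixSum (q : ℕ) (p : Fin q → ℝ) (k : ℕ) : ℝ :=
  ∑ i ∈ Finset.univ.filter (fun i : Fin q => (i : ℕ) < k), p i

/-- `p` is a probability distribution on `V = {1, …, q}`. -/
def IsDist (q : ℕ) (p : Fin q → ℝ) : Prop :=
  (∀ k, 0 ≤ p k) ∧ ∑ k, p k = 1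

/-- The modified prefix sums `s'_k` defining the operator `T_{ε,δ}`:
`s'_0 = 0` and `s'_k = min {1, min {e^ε s_k, 1 - e^{-ε} (1 - s_k)} + δ}` for `k ≥ 1`. -/
noncomputable def sPrime (ε δ : ℝ) (q : ℕ) (p : Fin q → ℝ) (k : ℕ) : ℝ :=
  if k = 0 then 0
  else min 1 (min (Real.exp ε * prefixSum q p k)
      (1 - Real.exp (-ε) * (1 - prefixSum q p k)) + δ)

/-- The operator `T_{ε,δ}`: `(T_{ε,δ} p)_k = s'_k - s'_{k-1}`. -/
noncomputable def Tmap (ε δ : ℝ) (q : ℕ) (p : Fin q → ℝ) : Fin q → ℝ :=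
  fun k => sPrime ε δ q p ((k : ℕ) + 1) - sPrime ε δ q p (k : ℕ)

/-- `P` and `Q` are `(ε,δ)`-close: for every `S ⊆ V`,
`P(S) ≤ e^ε Q(S) + δ` and `Q(S) ≤ e^ε P(S) + δ`. -/
def Close (ε δ : ℝ) (q : ℕ) (P Q : Fin q → ℝ) : Prop :=
  ∀ S : Finset (Fin q),
    (∑ k ∈ S, P k) ≤ Real.exp ε * (∑ k ∈ S, Q k) + δ ∧
    (∑ k ∈ S, Q k) ≤ Real.exp ε * (∑ k ∈ S, P k) + δ

/-- Dominance ordering: `x ⪯ y` iff every prefix sum of `x` is at most that of `y`. -/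
def Dom (q : ℕ) (x y : Fin q → ℝ) : Prop :=
  ∀ k : ℕ, k ≤ q → prefixSum q x k ≤ prefixSum q y k

lemma prefixSum_nonneg' (q : ℕ) (p : Fin q → ℝ) (hp : ∀ k, 0 ≤ p k) (k : ℕ) :
    0 ≤ prefixSum q p k :=
  Finset.sum_nonneg fun i _ => hp i

lemma prefixSum_le_one' (q : ℕ) (p : Fin q → ℝ) (hp : ∀ k, 0 ≤ p k) (hs : ∑ k, p k = 1)
    (k : ℕ) : prefixSum q p k ≤ 1 := by
  rw [← hs]
  exact Finset.sum_le_sum_of_subset_of_nonneg (Finset.filter_subset _ _)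
    (fun i _ _ => hp i)

lemma prefixSum_succ' (q : ℕ) (p : Fin q → ℝ) (k : Fin q) :
    prefixSum q p ((k : ℕ) + 1) = prefixSum q p (k : ℕ) + p k := by
  unfold prefixSum
  have h : Finset.univ.filter (fun i : Fin q => (i : ℕ) < (k : ℕ) + 1)
      = insert k (Finset.univ.filter (fun i : Fin q => (i : ℕ) < (k : ℕ))) := by
    ext i
    simp [Fin.ext_iff, Nat.lt_succ_iff_lt_or_eq, or_comm]
    simp only [Fin.le_def, Fin.lt_def]; omega
  rw [h, Finset.sum_insert (by simp)]
  ring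

lemma min_shift' {a b x y : ℝ} (hxy : y ≤ x) :
    y ≤ min (a + x) (b + y) - min a b ∧ min (a + x) (b + y) - min a b ≤ x := by
  rcases le_total (a + x) (b + y) with h | h <;> rcases le_total a b with h' | h' <;>
    simp [min_def, *] <;> constructor <;> linarith

lemma sPrime_eq_min (ε : ℝ) (hε : 0 ≤ ε) (q : ℕ) (p : Fin q → ℝ)
    (hp : ∀ k, 0 ≤ p k) (hs : ∑ k, p k = 1) (k : ℕ) :
    sPrime ε 0 q p k = min (Real.exp ε * prefixSum q p k)
      (1 - Real.exp (-ε) * (1 - prefixSum q p k)) := by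
  have h1 := prefixSum_nonneg' q p hp k
  have h2 := prefixSum_le_one' q p hp hs k
  have he : Real.exp (-ε) ≤ 1 := Real.exp_le_one_iff.mpr (by linarith)
  have he' : 0 < Real.exp ε := Real.exp_pos ε
  have he'' : 0 < Real.exp (-ε) := Real.exp_pos (-ε)
  unfold sPrime
  split_ifs with h
  · subst h
    have h0 : prefixSum q p 0 = 0 := by
      unfold prefixSum; simp
    rw [h0]
    have : min (Real.exp ε * 0) (1 - Real.exp (-ε) * (1 - 0)) = 0 := by
      rw [min_eq_left (by nlinarith)]; ring
    linarith [this]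
  · rw [add_zero, min_eq_right]
    exact le_trans (min_le_right _ _) (by nlinarith)

lemma Tmap_bounds' (ε : ℝ) (hε : 0 ≤ ε) (q : ℕ) (p : Fin q → ℝ)
    (hp : ∀ k, 0 ≤ p k) (hs : ∑ k, p k = 1) (k : Fin q) :
    Real.exp (-ε) * p k ≤ Tmap ε 0 q p k ∧ Tmap ε 0 q p k ≤ Real.exp ε * p k := by
  unfold Tmap
  rw [sPrime_eq_min ε hε q p hp hs, sPrime_eq_min ε hε q p hp hs, prefixSum_succ']
  have he' : 0 < Real.exp ε := Real.exp_pos ε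
  have he'' : 0 < Real.exp (-ε) := Real.exp_pos (-ε)
  have hee : Real.exp (-ε) ≤ Real.exp ε := Real.exp_le_exp.mpr (by linarith)
  have hA : Real.exp ε * (prefixSum q p (k : ℕ) + p k)
      = Real.exp ε * prefixSum q p (k : ℕ) + Real.exp ε * p k := by ring
  have hB : 1 - Real.exp (-ε) * (1 - (prefixSum q p (k : ℕ) + p k))
      = (1 - Real.exp (-ε) * (1 - prefixSum q p (k : ℕ))) + Real.exp (-ε) * p k := by ring
  rw [hA, hB]
  exact min_shift' (by nlinarith [hp k])

/-- For ε ≥ 0 and any distribution `p`, `T_{ε,0}(p)` is `(ε,0)`-close to `p`. -/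
theorem Tmap_close_zero (q : ℕ) (hq : 1 ≤ q) (ε : ℝ) (hε : 0 ≤ ε)
    (p : Fin q → ℝ) (hp : IsDist q p) :
    Close ε 0 q (Tmap ε 0 q p) p := by
  obtain ⟨hp1, hp2⟩ := hp
  intro S
  have hmul : Real.exp ε * Real.exp (-ε) = 1 := by
    rw [← Real.exp_add]; simp
  have he' : 0 < Real.exp ε := Real.exp_pos ε
  constructor
  · rw [add_zero, Finset.mul_sum]
    exact Finset.sum_le_sum fun k _ => (Tmap_bounds' ε hε q p hp1 hp2 k).2
  · rw [add_zero, Finset.mul_sum]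
    refine Finset.sum_le_sum fun k _ => ?_
    have h1 := (Tmap_bounds' ε hε q p hp1 hp2 k).1
    nlinarith [hp1 k]
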